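/- Consider the 6-dimensional real Lie algebra g_{2,b} with basis e0,...,e5 and nonzero brackets [e2,e3]=e1, [e5,e2]=-e3, [e5,e3]=e2, [e5,e4]=-e1, [e0,e5]=b e4, [e0,e2]=e3, [e0,e3]=-e2. Then θ = e^0 and ω = -e^{01} - e^{23} - e^{45} define an LCS structure: ω is nondegenerate, dθ = 0 and dω = θ ∧ ω. -/
import Mathlib

/-- The bracket of the 6-dimensional Lie algebra `g_{2,b}`: nonzero brackets
`[e2,e3]=e1`, `[e5,e2]=-e3`, `[e5,e3]=e2`, `[e5,e4]=-e1`, `[e0,e5]=b e4`, `[e0,e2]=e3`,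
`[e0,e3]=-e2`. -/
def g2Bracket (b : ℝ) (X Y : Fin 6 → ℝ) : Fin 6 → ℝ :=
  ![0,
    X 2 * Y 3 - X 3 * Y 2 - (X 5 * Y 4 - X 4 * Y 5),
    (X 5 * Y 3 - X 3 * Y 5) - (X 0 * Y 3 - X 3 * Y 0),
    -(X 5 * Y 2 - X 2 * Y 5) + (X 0 * Y 2 - X 2 * Y 0),
    b * (X 0 * Y 5 - X 5 * Y 0),
    0]

/-- The 1-form `θ = e^0` on `g_{2,b}`. -/
def g2θ (X : Fin 6 → ℝ) : ℝ := X 0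

/-- The 2-form `ω = -e^{01} - e^{23} - e^{45}` on `g_{2,b}`. -/
def g2ω (X Y : Fin 6 → ℝ) : ℝ :=
  -(X 0 * Y 1 - X 1 * Y 0) - (X 2 * Y 3 - X 3 * Y 2) - (X 4 * Y 5 - X 5 * Y 4)


private lemma vec6_0 (a b c d e f : ℝ) : ![a,b,c,d,e,f] 0 = a := rfl
private lemma vec6_1 (a b c d e f : ℝ) : ![a,b,c,d,e,f] 1 = b := rfl
private lemma vec6_2 (a b c d e f : ℝ) : ![a,b,c,d,e,f] 2 = c := rfl
private lemma vec6_3 (a b c d e f : ℝ) : ![a,b,c,d,e,f] 3 = d := rfl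
private lemma vec6_4 (a b c d e f : ℝ) : ![a,b,c,d,e,f] 4 = e := rfl
private lemma vec6_5 (a b c d e f : ℝ) : ![a,b,c,d,e,f] 5 = f := rfl

/-- On `g_{2,b}`, the pair `(ω = -e^{01} - e^{23} - e^{45}, θ = e^0)` is an LCS structure:
`ω` is nondegenerate, `dθ = 0`, and `dω = θ ∧ ω` (Chevalley–Eilenberg differential). -/
theorem g2_lcs (b : ℝ) :
    (∀ X : Fin 6 → ℝ, (∀ Y : Fin 6 → ℝ, g2ω X Y = 0) → X = 0) ∧
    (∀ X Y : Fin 6 → ℝ, -g2θ (g2Bracket b X Y) = 0) ∧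
    (∀ X Y Z : Fin 6 → ℝ,
      -g2ω (g2Bracket b X Y) Z + g2ω (g2Bracket b X Z) Y - g2ω (g2Bracket b Y Z) X
        = g2θ X * g2ω Y Z - g2θ Y * g2ω X Z + g2θ Z * g2ω X Y) := by
  refine ⟨?_, ?_, ?_⟩
  · intro X h
    funext i
    fin_cases i
    · have := h ![0,1,0,0,0,0]; simpa [g2ω, vec6_0, vec6_1, vec6_2, vec6_3, vec6_4, vec6_5] using this
    · have := h ![1,0,0,0,0,0]; simp [g2ω, vec6_0, vec6_1, vec6_2, vec6_3, vec6_4, vec6_5] at this; simpa using this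
    · have := h ![0,0,0,1,0,0]; simp [g2ω, vec6_0, vec6_1, vec6_2, vec6_3, vec6_4, vec6_5] at this; simpa using this
    · have := h ![0,0,1,0,0,0]; simp [g2ω, vec6_0, vec6_1, vec6_2, vec6_3, vec6_4, vec6_5] at this; simpa using this
    · have := h ![0,0,0,0,0,1]; simp [g2ω, vec6_0, vec6_1, vec6_2, vec6_3, vec6_4, vec6_5] at this; simpa using this
    · have := h ![0,0,0,0,1,0]; simp [g2ω, vec6_0, vec6_1, vec6_2, vec6_3, vec6_4, vec6_5] at this; simpa using this
  · intro X Y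
    simp [g2θ, g2Bracket]
  · intro X Y Z
    simp only [g2θ, g2ω, g2Bracket, vec6_0, vec6_1, vec6_2, vec6_3, vec6_4, vec6_5]
    ring
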